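/- For $r > 1$, one has $2^{3-r}|s-t|^{r+1} \le 4\big(|s|^{(r+1)/2}\mathrm{sgn}(s) - |t|^{(r+1)/2}\mathrm{sgn}(t)\big)^2$ for all real $s,t$. -/

import Mathlib

open Real

private lemma aux_superadd {x y p : ℝ} (hx : 0 ≤ x) (hy : 0 ≤ y) (hp : 1 ≤ p) :
    x ^ p + y ^ p ≤ (x + y) ^ p := by
  have h := NNReal.add_rpow_le_rpow_add (⟨x, hx⟩ : NNReal) (⟨y, hy⟩ : NNReal) hp
  have := NNReal.coe_le_coe.2 h
  exact this

private lemma aux_mixed {x y p : ℝ} (hx : 0 ≤ x) (hy : 0 ≤ y) (hp : 1 ≤ p) :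
    (x + y) ^ p ≤ 2 ^ (p - 1) * (x ^ p + y ^ p) := by
  have h := NNReal.rpow_add_le_mul_rpow_add_rpow (⟨x, hx⟩ : NNReal) (⟨y, hy⟩ : NNReal) hp
  have := NNReal.coe_le_coe.2 h
  exact this

private lemma phi_nonneg {x p : ℝ} (hx : 0 ≤ x) :
    |x| ^ p * Real.sign x = x ^ p ∨ (x = 0 ∧ |x| ^ p * Real.sign x = 0) := by
  rcases hx.lt_or_eq with h | h
  · left; rw [Real.sign_of_pos h, abs_of_pos h, mul_one]
  · right; exact ⟨h.symm, by simp [← h, Real.sign_zero]⟩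

private lemma phi_of_pos {x p : ℝ} (hx : 0 < x) :
    |x| ^ p * Real.sign x = x ^ p := by
  rw [Real.sign_of_pos hx, abs_of_pos hx, mul_one]

private lemma phi_of_nonneg {x p : ℝ} (hp : 0 < p) (hx : 0 ≤ x) :
    |x| ^ p * Real.sign x = x ^ p := by
  rcases hx.lt_or_eq with h | h
  · exact phi_of_pos h
  · simp [← h, Real.sign_zero, Real.zero_rpow hp.ne']

private lemma phi_of_nonpos {x p : ℝ} (hp : 0 < p) (hx : x ≤ 0) :
    |x| ^ p * Real.sign x = -((-x) ^ p) := by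
  rcases hx.lt_or_eq with h | h
  · rw [Real.sign_of_neg h, abs_of_neg h, mul_neg_one]
  · simp [h, Real.sign_zero, Real.zero_rpow hp.ne']

private lemma key (p : ℝ) (hp : 1 ≤ p) (s t : ℝ) :
    |s - t| ^ p ≤ 2 ^ (p - 1) * |(|s| ^ p * Real.sign s - |t| ^ p * Real.sign t)| := by
  have hp0 : (0:ℝ) < p := lt_of_lt_of_le one_pos hp
  have h2 : (1:ℝ) ≤ 2 ^ (p - 1) := by
    rw [show (1:ℝ) = 2 ^ (0:ℝ) by simp]
    exact Real.rpow_le_rpow_left_iff (by norm_num) |>.2 (by linarith)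
  wlog h : t ≤ s generalizing s t
  · have := this t s (le_of_not_ge h)
    rwa [abs_sub_comm, abs_sub_comm (|t| ^ p * Real.sign t)] at this
  rcases le_total 0 t with ht | ht
  · -- 0 ≤ t ≤ s
    have hs : 0 ≤ s := le_trans ht h
    rw [phi_of_nonneg hp0 hs, phi_of_nonneg hp0 ht]
    have hmono : t ^ p ≤ s ^ p := Real.rpow_le_rpow ht h hp0.le
    rw [abs_of_nonneg (by linarith : (0:ℝ) ≤ s - t), abs_of_nonneg (by linarith)]
    have hsup : (s - t) ^ p + t ^ p ≤ s ^ p := by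
      have := aux_superadd (x := s - t) (y := t) (by linarith) ht hp
      rwa [sub_add_cancel] at this
    calc (s - t) ^ p ≤ s ^ p - t ^ p := by linarith
      _ ≤ 2 ^ (p - 1) * (s ^ p - t ^ p) := le_mul_of_one_le_left (by linarith) h2
  · rcases le_total 0 s with hs | hs
    · -- t ≤ 0 ≤ s
      rw [phi_of_nonneg hp0 hs, phi_of_nonpos hp0 ht]
      have hmt : 0 ≤ -t := by linarith
      have := aux_mixed hs hmt hp
      have h1 : (0:ℝ) ≤ s ^ p := Real.rpow_nonneg hs _
      have h2' : (0:ℝ) ≤ (-t) ^ p := Real.rpow_nonneg hmt _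
      rw [abs_of_nonneg (by linarith : (0:ℝ) ≤ s - t),
        abs_of_nonneg (by linarith : (0:ℝ) ≤ s ^ p - -(-t) ^ p)]
      calc (s - t) ^ p = (s + -t) ^ p := by ring_nf
        _ ≤ 2 ^ (p - 1) * (s ^ p + (-t) ^ p) := this
        _ = 2 ^ (p - 1) * (s ^ p - -(-t) ^ p) := by ring
    · -- t ≤ s ≤ 0
      rw [phi_of_nonpos hp0 hs, phi_of_nonpos hp0 ht]
      have h' : -s ≤ -t := by linarith
      have hms : 0 ≤ -s := by linarith
      have hmono : (-s) ^ p ≤ (-t) ^ p := Real.rpow_le_rpow hms h' hp0.le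
      rw [abs_of_nonneg (by linarith : (0:ℝ) ≤ s - t),
        abs_of_nonneg (by linarith : (0:ℝ) ≤ -(-s) ^ p - -(-t) ^ p)]
      have hsup : (-t - -s) ^ p + (-s) ^ p ≤ (-t) ^ p := by
        have := aux_superadd (x := -t - -s) (y := -s) (by linarith) hms hp
        rwa [sub_add_cancel] at this
      calc (s - t) ^ p = (-t - -s) ^ p := by ring_nf
        _ ≤ (-t) ^ p - (-s) ^ p := by linarith
        _ = -(-s) ^ p - -(-t) ^ p := by ring
        _ ≤ 2 ^ (p - 1) * (-(-s) ^ p - -(-t) ^ p) := le_mul_of_one_le_left (by linarith) h2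

theorem stmt2 (r : ℝ) (hr : 1 < r) (s t : ℝ) :
    (2 : ℝ) ^ (3 - r) * |s - t| ^ (r + 1)
      ≤ 4 * (|s| ^ ((r + 1) / 2) * Real.sign s - |t| ^ ((r + 1) / 2) * Real.sign t) ^ 2 := by
  set p := (r + 1) / 2 with hpdef
  have hp : 1 ≤ p := by rw [hpdef]; linarith
  have hkey := key p hp s t
  set D := |s| ^ p * Real.sign s - |t| ^ p * Real.sign t with hD
  have h1 : |s - t| ^ (r + 1) = (|s - t| ^ p) ^ 2 := by
    rw [← Real.rpow_natCast (|s - t| ^ p) 2, ← Real.rpow_mul (abs_nonneg _)]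
    congr 1
    push_cast
    rw [hpdef]; ring
  have h2 : (|s - t| ^ p) ^ 2 ≤ (2 ^ (p - 1) * |D|) ^ 2 := by
    have h0 : (0:ℝ) ≤ |s - t| ^ p := Real.rpow_nonneg (abs_nonneg _) _
    exact pow_le_pow_left₀ h0 hkey 2
  have h3 : (2 ^ (p - 1) * |D|) ^ 2 = 2 ^ (r - 1) * D ^ 2 := by
    rw [mul_pow, sq_abs, ← Real.rpow_natCast ((2:ℝ) ^ (p - 1)) 2,
      ← Real.rpow_mul (by norm_num : (0:ℝ) ≤ 2)]
    congr 1
    push_cast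
    rw [hpdef]; ring
  have hfac : (2:ℝ) ^ (3 - r) * (2 ^ (r - 1)) = 4 := by
    rw [← Real.rpow_add (by norm_num : (0:ℝ) < 2)]
    norm_num
  calc (2 : ℝ) ^ (3 - r) * |s - t| ^ (r + 1)
      ≤ (2 : ℝ) ^ (3 - r) * (2 ^ (r - 1) * D ^ 2) := by
        rw [h1]
        exact mul_le_mul_of_nonneg_left (h3 ▸ h2) (Real.rpow_nonneg (by norm_num) _)
      _ = 4 * D ^ 2 := by rw [← mul_assoc, hfac]
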